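/- In the steady state of the self-regulating gene model, for every s ∈ ℕ: ψ E[N^{s+1} 1_{A=1}] = θ E[N^s 1_{A=0}] + ∑_{j=1}^s C(s,j)((−1)^j μ E[N^{s−j+1} 1_{A=1}] + λ E[N^{s−j} 1_{A=1}]). -/
import Mathlib


/-- Moment recursion in the unbound state: for every `s`,
`ψ E[N^{s+1} 1_{A=1}] = θ E[N^s 1_{A=0}]
  + ∑_{j=1}^s C(s,j)((−1)^j μ E[N^{s−j+1} 1_{A=1}] + λ E[N^{s−j} 1_{A=1}])`. -/
theorem stmt12 (lam lamt μ θ ψ : ℝ) (hlam : 0 < lam) (hμ : 0 < μ) (hθ : 0 < θ)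
    (hψ : 0 < ψ) (hlamt : 0 ≤ lamt)
    (π1 π0 : ℕ → ℝ)
    (hnonneg : ∀ n, 0 ≤ π1 n ∧ 0 ≤ π0 n)
    (h00 : π0 0 = 0)
    (htotal : (∑' n, π1 n) + (∑' n, π0 n) = 1)
    (hmom1 : ∀ k : ℕ, Summable (fun n : ℕ => (n : ℝ) ^ k * π1 n))
    (hmom0 : ∀ k : ℕ, Summable (fun n : ℕ => (n : ℝ) ^ k * π0 n))
    (hboundary : π1 0 * lam = π1 1 * μ + π0 0 * θ)
    (hmaster1 : ∀ n : ℕ, 1 ≤ n →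
        π1 n * (n * (ψ + μ) + lam)
          = π1 (n - 1) * lam + π1 (n + 1) * (n + 1) * μ + π0 n * θ)
    (hmaster0 : ∀ n : ℕ, 1 ≤ n →
        π0 n * (((n : ℝ) - 1) * μ + θ + lamt)
          = π0 (n - 1) * lamt + π0 (n + 1) * n * μ + π1 n * ψ * n)
    (s : ℕ) :
    ψ * ∑' n : ℕ, (n : ℝ) ^ (s + 1) * π1 n
      = θ * (∑' n : ℕ, (n : ℝ) ^ s * π0 n)
        + ∑ j ∈ Finset.Icc 1 s,
            (s.choose j : ℝ)
              * ((-1) ^ j * μ * (∑' n : ℕ, (n : ℝ) ^ (s - j + 1) * π1 n)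
                  + lam * ∑' n : ℕ, (n : ℝ) ^ (s - j) * π1 n) := by
  obtain ⟨M1, hM1⟩ : ∃ M1 : ℕ → ℝ, ∀ k, M1 k = ∑' n : ℕ, (n : ℝ) ^ k * π1 n :=
    ⟨_, fun _ => rfl⟩
  obtain ⟨M0, hM0⟩ : ∃ M0 : ℕ → ℝ, ∀ k, M0 k = ∑' n : ℕ, (n : ℝ) ^ k * π0 n :=
    ⟨_, fun _ => rfl⟩
  simp only [← hM1, ← hM0]
  -- binomial expansions (pointwise)
  have hexpT : ∀ n : ℕ, ((n : ℝ) + 1) ^ s * π1 n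
      = ∑ k ∈ Finset.range (s + 1), (s.choose k : ℝ) * ((n : ℝ) ^ k * π1 n) := by
    intro n
    rw [add_pow, Finset.sum_mul]
    exact Finset.sum_congr rfl fun k _ => by ring
  have hexpU : ∀ n : ℕ, (n : ℝ) * ((n : ℝ) - 1) ^ s * π1 n
      = ∑ k ∈ Finset.range (s + 1),
          ((s.choose k : ℝ) * (-1) ^ (s - k)) * ((n : ℝ) ^ (k + 1) * π1 n) := by
    intro n
    have h : ((n : ℝ) - 1) ^ s = ∑ k ∈ Finset.range (s + 1),
        (n : ℝ) ^ k * (-1 : ℝ) ^ (s - k) * (s.choose k : ℝ) := by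
      rw [sub_eq_add_neg, add_pow]
    rw [h, Finset.mul_sum, Finset.sum_mul]
    exact Finset.sum_congr rfl fun k _ => by ring
  -- summability
  have hTsummable : Summable fun n : ℕ => ((n : ℝ) + 1) ^ s * π1 n :=
    (summable_sum fun k _ => (hmom1 k).mul_left (s.choose k : ℝ)).congr
      fun n => (hexpT n).symm
  have hUsummable : Summable fun n : ℕ => (n : ℝ) * ((n : ℝ) - 1) ^ s * π1 n :=
    (summable_sum fun k _ => (hmom1 (k + 1)).mul_left _).congr fun n => (hexpU n).symm
  have hfsummable : Summable fun n : ℕ =>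
      (n : ℝ) ^ s * (π1 n * ((n : ℝ) * (ψ + μ) + lam)) :=
    ((((hmom1 (s + 1)).mul_left (ψ + μ))).add ((hmom1 s).mul_left lam)).congr
      fun n => by ring
  have hg2 : Summable fun n : ℕ => ((n : ℝ) + 2) * ((n : ℝ) + 1) ^ s * π1 (n + 2) :=
    ((summable_nat_add_iff 2).2 hUsummable).congr fun n => by push_cast; ring
  have hg3 : Summable fun n : ℕ => ((n : ℝ) + 1) ^ s * π0 (n + 1) :=
    ((summable_nat_add_iff 1).2 (hmom0 s)).congr fun n => by push_cast; ring
  -- values of T and U via binomial expansion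
  have hTval : (∑' n : ℕ, ((n : ℝ) + 1) ^ s * π1 n)
      = ∑ k ∈ Finset.range (s + 1), (s.choose k : ℝ) * M1 k := by
    rw [tsum_congr hexpT, Summable.tsum_finsetSum fun k _ => (hmom1 k).mul_left _]
    exact Finset.sum_congr rfl fun k _ => by rw [tsum_mul_left, hM1]
  have hUval : (∑' n : ℕ, (n : ℝ) * ((n : ℝ) - 1) ^ s * π1 n)
      = ∑ k ∈ Finset.range (s + 1), ((s.choose k : ℝ) * (-1) ^ (s - k)) * M1 (k + 1) := by
    rw [tsum_congr hexpU, Summable.tsum_finsetSum fun k _ => (hmom1 (k + 1)).mul_left _]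
    exact Finset.sum_congr rfl fun k _ => by rw [tsum_mul_left, hM1]
  -- value of f
  have hfval : (∑' n : ℕ, (n : ℝ) ^ s * (π1 n * ((n : ℝ) * (ψ + μ) + lam)))
      = (ψ + μ) * M1 (s + 1) + lam * M1 s := by
    rw [tsum_congr (g := fun n : ℕ =>
        (ψ + μ) * ((n : ℝ) ^ (s + 1) * π1 n) + lam * ((n : ℝ) ^ s * π1 n))
        (fun n => by ring),
      Summable.tsum_add ((hmom1 (s + 1)).mul_left _) ((hmom1 s).mul_left _),
      tsum_mul_left, tsum_mul_left, hM1, hM1]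
  -- shift identities
  have hG3 : M0 s = ∑' n : ℕ, ((n : ℝ) + 1) ^ s * π0 (n + 1) := by
    rw [hM0, Summable.tsum_eq_zero_add (hmom0 s), h00, mul_zero, zero_add]
    exact tsum_congr fun n => by push_cast; ring
  have hU1s : Summable fun n : ℕ => ((n : ℝ) + 1) * (n : ℝ) ^ s * π1 (n + 1) :=
    ((summable_nat_add_iff 1).2 hUsummable).congr fun n => by push_cast; ring
  have e0 : (∑' n : ℕ, (n : ℝ) * ((n : ℝ) - 1) ^ s * π1 n)
      = 0 + ∑' n : ℕ, ((n : ℝ) + 1) * (n : ℝ) ^ s * π1 (n + 1) := by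
    rw [Summable.tsum_eq_zero_add hUsummable]
    congr 1
    · push_cast; ring
    · exact tsum_congr fun n => by push_cast; ring
  have e1 : (∑' n : ℕ, ((n : ℝ) + 1) * (n : ℝ) ^ s * π1 (n + 1))
      = (0 : ℝ) ^ s * π1 1 + ∑' n : ℕ, ((n : ℝ) + 2) * ((n : ℝ) + 1) ^ s * π1 (n + 2) := by
    rw [Summable.tsum_eq_zero_add hU1s]
    congr 1
    · push_cast; ring
    · exact tsum_congr fun n => by push_cast; ring
  have hU : (∑' n : ℕ, (n : ℝ) * ((n : ℝ) - 1) ^ s * π1 n)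
      = (0 : ℝ) ^ s * π1 1 + ∑' n : ℕ, ((n : ℝ) + 2) * ((n : ℝ) + 1) ^ s * π1 (n + 2) := by
    rw [e0, e1, zero_add]
  -- tail of master sum
  have hftail : ∀ n : ℕ, ((n + 1 : ℕ) : ℝ) ^ s * (π1 (n + 1) * (((n + 1 : ℕ) : ℝ) * (ψ + μ) + lam))
      = lam * (((n : ℝ) + 1) ^ s * π1 n)
        + μ * (((n : ℝ) + 2) * ((n : ℝ) + 1) ^ s * π1 (n + 2))
        + θ * (((n : ℝ) + 1) ^ s * π0 (n + 1)) := by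
    intro n
    have h := hmaster1 (n + 1) (by omega)
    simp only [Nat.add_sub_cancel] at h
    push_cast at h ⊢
    linear_combination ((n : ℝ) + 1) ^ s * h
  have htail : (∑' n : ℕ, ((n + 1 : ℕ) : ℝ) ^ s * (π1 (n + 1) * (((n + 1 : ℕ) : ℝ) * (ψ + μ) + lam)))
      = lam * (∑' n : ℕ, ((n : ℝ) + 1) ^ s * π1 n)
        + μ * (∑' n : ℕ, ((n : ℝ) + 2) * ((n : ℝ) + 1) ^ s * π1 (n + 2))
        + θ * (∑' n : ℕ, ((n : ℝ) + 1) ^ s * π0 (n + 1)) := by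
    rw [tsum_congr hftail,
      Summable.tsum_add ((hTsummable.mul_left lam).add (hg2.mul_left μ)) (hg3.mul_left θ),
      Summable.tsum_add (hTsummable.mul_left lam) (hg2.mul_left μ),
      tsum_mul_left, tsum_mul_left, tsum_mul_left]
  have hf0 : ((0 : ℕ) : ℝ) ^ s * (π1 0 * (((0 : ℕ) : ℝ) * (ψ + μ) + lam))
      = μ * ((0 : ℝ) ^ s * π1 1) := by
    have hb : π1 0 * lam = π1 1 * μ := by rw [hboundary, h00]; ring
    push_cast
    linear_combination (0 : ℝ) ^ s * hb
  -- main summed master equation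
  have hmain : (ψ + μ) * M1 (s + 1) + lam * M1 s
      = lam * (∑' n : ℕ, ((n : ℝ) + 1) ^ s * π1 n)
        + μ * (∑' n : ℕ, (n : ℝ) * ((n : ℝ) - 1) ^ s * π1 n) + θ * M0 s := by
    calc (ψ + μ) * M1 (s + 1) + lam * M1 s
        = ∑' n : ℕ, (n : ℝ) ^ s * (π1 n * ((n : ℝ) * (ψ + μ) + lam)) := hfval.symm
      _ = ((0 : ℕ) : ℝ) ^ s * (π1 0 * (((0 : ℕ) : ℝ) * (ψ + μ) + lam))
          + ∑' n : ℕ, ((n + 1 : ℕ) : ℝ) ^ s * (π1 (n + 1) * (((n + 1 : ℕ) : ℝ) * (ψ + μ) + lam)) :=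
          Summable.tsum_eq_zero_add hfsummable
      _ = μ * ((0 : ℝ) ^ s * π1 1)
          + (lam * (∑' n : ℕ, ((n : ℝ) + 1) ^ s * π1 n)
            + μ * (∑' n : ℕ, ((n : ℝ) + 2) * ((n : ℝ) + 1) ^ s * π1 (n + 2))
            + θ * (∑' n : ℕ, ((n : ℝ) + 1) ^ s * π0 (n + 1))) := by rw [hf0, htail]
      _ = lam * (∑' n : ℕ, ((n : ℝ) + 1) ^ s * π1 n)
          + μ * (∑' n : ℕ, (n : ℝ) * ((n : ℝ) - 1) ^ s * π1 n) + θ * M0 s := by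
            rw [hU, hG3]; ring
  -- reindex the binomial sums
  have hTfinal : (∑' n : ℕ, ((n : ℝ) + 1) ^ s * π1 n)
      = M1 s + ∑ j ∈ Finset.Icc 1 s, (s.choose j : ℝ) * M1 (s - j) := by
    rw [hTval, Finset.sum_range_succ, Nat.choose_self, Nat.cast_one, one_mul, add_comm]
    congr 1
    refine Finset.sum_nbij' (fun k => s - k) (fun j => s - j) ?_ ?_ ?_ ?_ ?_ <;>
        simp only [Finset.mem_range, Finset.mem_Icc] <;> intro a ha
    · omega
    · omega
    · omega
    · omega
    · have h1 : s - (s - a) = a := by omega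
      have h2 : s.choose (s - a) = s.choose a := Nat.choose_symm (by omega)
      rw [h1, h2]
  have hUfinal : (∑' n : ℕ, (n : ℝ) * ((n : ℝ) - 1) ^ s * π1 n)
      = M1 (s + 1)
        + ∑ j ∈ Finset.Icc 1 s, (s.choose j : ℝ) * (-1) ^ j * M1 (s - j + 1) := by
    rw [hUval, Finset.sum_range_succ, Nat.choose_self, Nat.cast_one, Nat.sub_self,
      pow_zero, mul_one, one_mul, add_comm]
    congr 1
    refine Finset.sum_nbij' (fun k => s - k) (fun j => s - j) ?_ ?_ ?_ ?_ ?_ <;>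
        simp only [Finset.mem_range, Finset.mem_Icc] <;> intro a ha
    · omega
    · omega
    · omega
    · omega
    · have h1 : s - (s - a) = a := by omega
      have h2 : s.choose (s - a) = s.choose a := Nat.choose_symm (by omega)
      rw [h1, h2]
  -- final algebra
  have hsum : (∑ j ∈ Finset.Icc 1 s, (s.choose j : ℝ)
        * ((-1) ^ j * μ * M1 (s - j + 1) + lam * M1 (s - j)))
      = μ * (∑ j ∈ Finset.Icc 1 s, (s.choose j : ℝ) * (-1) ^ j * M1 (s - j + 1))
        + lam * (∑ j ∈ Finset.Icc 1 s, (s.choose j : ℝ) * M1 (s - j)) := by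
    rw [Finset.mul_sum, Finset.mul_sum, ← Finset.sum_add_distrib]
    exact Finset.sum_congr rfl fun j _ => by ring
  rw [hTfinal, hUfinal] at hmain
  rw [hsum]
  linarith
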